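/- A finite graph is chordal if and only if it admits a clique tree, i.e., a tree T whose vertices are the maximal cliques of G such that for every vertex v of G, the maximal cliques containing v induce a subtree (connected subgraph) of T. -/

import Mathlib

open SimpleGraph

variable {V : Type*}

/-- `S` separates `u` and `w` in `G`: every walk from `u` to `w` meets `S`. -/
def Separates (G : SimpleGraph V) (S : Set V) (u w : V) : Prop :=
  ∀ p : G.Walk u w, ∃ x ∈ p.support, x ∈ S

/-- `S` is a minimal `{u,w}`-separator. -/
def IsMinUWSeparator (G : SimpleGraph V) (S : Set V) (u w : V) : Prop :=
  u ≠ w ∧ ¬ G.Adj u w ∧ u ∉ S ∧ w ∉ S ∧ Separates G S u w ∧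
    ∀ S' ⊂ S, ¬ Separates G S' u w

/-- `S` is a minimal separator of `G`. -/
def IsMinSeparator (G : SimpleGraph V) (S : Set V) : Prop :=
  ∃ u w : V, IsMinUWSeparator G S u w

/-- A vertex is simplicial if its neighborhood is a clique. -/
def IsSimplicial (G : SimpleGraph V) (v : V) : Prop :=
  G.IsClique (G.neighborSet v)

/-- A maximal clique (as a vertex set). -/
def IsMaxClique (G : SimpleGraph V) (s : Set V) : Prop :=
  G.IsClique s ∧ ∀ t : Set V, G.IsClique t → s ⊆ t → s = t

/-- A graph is chordal if it has no induced cycle of length at least 4. -/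
def Chordal (G : SimpleGraph V) : Prop :=
  ∀ n : ℕ, 4 ≤ n → IsEmpty (SimpleGraph.cycleGraph n ↪g G)

/-- The type of maximal cliques of `G`. -/
abbrev MaxCliques (G : SimpleGraph V) := {s : Set V // IsMaxClique G s}

/-- `T` is a clique tree of `G`: a tree on the maximal cliques such that for each vertex
the cliques containing it induce a connected subgraph. -/
def IsCliqueTree (G : SimpleGraph V) (T : SimpleGraph (MaxCliques G)) : Prop :=
  T.IsTree ∧ ∀ v : V, (T.induce {Q : MaxCliques G | v ∈ Q.1}).Connected

/-- The set `X` induces a path in `T` (assuming `T` is a tree: connected with max degree 2). -/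
def InducesPath {α : Type*} (T : SimpleGraph α) (X : Set α) : Prop :=
  (T.induce X).Connected ∧ ∀ x : X, ((T.induce X).neighborSet x).ncard ≤ 2

/-- `T` is a clique path tree of `G`. -/
def IsCliquePathTree (G : SimpleGraph V) (T : SimpleGraph (MaxCliques G)) : Prop :=
  T.IsTree ∧ ∀ v : V, InducesPath T {Q : MaxCliques G | v ∈ Q.1}

/-- `G` is a path graph: the empty graph, or a graph admitting a clique path tree. -/
def IsPathGraph (G : SimpleGraph V) : Prop :=
  IsEmpty V ∨ ∃ T : SimpleGraph (MaxCliques G), IsCliquePathTree G T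

/-- `G` is an interval graph: intersection graph of closed real intervals. -/
def IsIntervalGraph (G : SimpleGraph V) : Prop :=
  ∃ f : V → Set ℝ, (∀ v, ∃ a b : ℝ, a ≤ b ∧ f v = Set.Icc a b) ∧
    ∀ u v : V, u ≠ v → (G.Adj u v ↔ (f u ∩ f v).Nonempty)

/-- `a` is a middle of `b, c`: every walk from `b` to `c` meets `N(a)`. -/
def IsMiddle (G : SimpleGraph V) (a b c : V) : Prop :=
  ∀ p : G.Walk b c, ∃ x ∈ p.support, G.Adj a x

/-- `a, b, c` form an asteroidal triple. -/
def AsteroidalTriple (G : SimpleGraph V) (a b c : V) : Prop :=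
  a ≠ b ∧ a ≠ c ∧ b ≠ c ∧ ¬ G.Adj a b ∧ ¬ G.Adj a c ∧ ¬ G.Adj b c ∧
  (∃ p : G.Walk b c, ∀ x ∈ p.support, ¬ G.Adj a x) ∧
  (∃ p : G.Walk a c, ∀ x ∈ p.support, ¬ G.Adj b x) ∧
  (∃ p : G.Walk a b, ∀ x ∈ p.support, ¬ G.Adj c x)

/-- The closed neighborhood clique `Q_v` of a simplicial vertex. -/
def Qv (G : SimpleGraph V) (v : V) : Set V := insert v (G.neighborSet v)

/-- `S_v`: the vertices of `Q_v` having a neighbor outside `Q_v`. -/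
def Sv (G : SimpleGraph V) (v : V) : Set V :=
  {x | x ∈ Qv G v ∧ ∃ y, y ∉ Qv G v ∧ G.Adj x y}

/-- A simplicial vertex is special if `S_v` is an inclusion-maximal minimal separator. -/
def IsSpecial (G : SimpleGraph V) (v : V) : Prop :=
  IsSimplicial G v ∧ IsMinSeparator G (Sv G v) ∧
    ∀ S : Set V, IsMinSeparator G S → Sv G v ⊆ S → S = Sv G v

/-- Connected components of `G ∖ S` containing a vertex complete to `S`. -/
def CompleteComponents (G : SimpleGraph V) (S : Set V) :
    Set ((G.induce (Sᶜ : Set V)).ConnectedComponent) :=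
  {C | ∃ x : (Sᶜ : Set V), (G.induce (Sᶜ : Set V)).connectedComponentMk x = C ∧
        S ⊆ G.neighborSet x.1}

/-- The wheel graph: an `n`-cycle plus a universal vertex (`none`). -/
def wheelGraph (n : ℕ) : SimpleGraph (Option (Fin n)) :=
  SimpleGraph.fromRel (fun a b =>
    (∃ i j : Fin n, a = some i ∧ b = some j ∧ (SimpleGraph.cycleGraph n).Adj i j) ∨
    (a = none ∧ b ≠ none))

/-- `y` lies on the tree-path between `x` and `z` in `T`. -/
def OnTreePath {α : Type*} (T : SimpleGraph α) (x y z : α) : Prop :=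
  ∃ p : T.Walk x z, p.IsPath ∧ y ∈ p.support

section Basics
variable {V : Type*}

lemma IsMaxClique.adj {G : SimpleGraph V} {s : Set V} (h : IsMaxClique G s)
    {u w : V} (hu : u ∈ s) (hw : w ∈ s) (hne : u ≠ w) : G.Adj u w :=
  h.1 hu hw hne

lemma exists_maxClique_supset [Finite V] (G : SimpleGraph V) {s : Set V}
    (hs : G.IsClique s) : ∃ Q : Set V, IsMaxClique G Q ∧ s ⊆ Q := by
  classical
  have hfam : {t : Set V | G.IsClique t ∧ s ⊆ t}.Finite := Set.toFinite _
  have hne : {t : Set V | G.IsClique t ∧ s ⊆ t}.Nonempty := ⟨s, hs, subset_rfl⟩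
  obtain ⟨Q, hQ, hmax⟩ := hfam.exists_maximal hne
  refine ⟨Q, ⟨hQ.1, fun t ht hsub => ?_⟩, hQ.2⟩
  exact subset_antisymm hsub (hmax ⟨ht, hQ.2.trans hsub⟩ hsub)

lemma exists_maxClique_pair [Finite V] {G : SimpleGraph V} {u w : V} (h : G.Adj u w) :
    ∃ Q : MaxCliques G, u ∈ Q.1 ∧ w ∈ Q.1 := by
  obtain ⟨Q, hQ, hsub⟩ := exists_maxClique_supset G (SimpleGraph.isClique_pair.2 fun _ => h)
  exact ⟨⟨Q, hQ⟩, hsub (Set.mem_insert _ _), hsub (Set.mem_insert_iff.2 (Or.inr rfl))⟩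

lemma exists_maxClique_mem [Finite V] (G : SimpleGraph V) (v : V) :
    ∃ Q : MaxCliques G, v ∈ Q.1 := by
  obtain ⟨Q, hQ, hsub⟩ := exists_maxClique_supset G (SimpleGraph.isClique_singleton v)
  exact ⟨⟨Q, hQ⟩, hsub rfl⟩

/-- A walk in an induced subgraph gives a walk in `G` with support inside the set. -/
lemma walk_of_induce {G : SimpleGraph V} {A : Set V} {x y : A}
    (w : (G.induce A).Walk x y) :
    ∃ p : G.Walk x.1 y.1, p.support = w.support.map Subtype.val := by
  refine ⟨w.map (SimpleGraph.Embedding.induce A).toHom, ?_⟩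
  exact SimpleGraph.Walk.support_map _ _

/-- A walk in `G` with support inside `A` lifts to the induced subgraph. -/
lemma walk_to_induce {G : SimpleGraph V} (A : Set V) :
    ∀ {u v : V} (w : G.Walk u v), (∀ z ∈ w.support, z ∈ A) →
      ∀ (hu : u ∈ A) (hv : v ∈ A), ∃ w' : (G.induce A).Walk ⟨u, hu⟩ ⟨v, hv⟩,
        w'.map (SimpleGraph.Embedding.induce A).toHom = w := by
  intro u v w
  induction w with
  | nil => intro _ hu hv; exact ⟨SimpleGraph.Walk.nil, rfl⟩
  | @cons a b c hab p ih =>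
    intro hsub hu hv
    have hb : b ∈ A := hsub b (by simp)
    obtain ⟨q, hq⟩ := ih (fun z hz => hsub z (by simp [hz])) hb hv
    refine ⟨SimpleGraph.Walk.cons (by exact hab) q, ?_⟩
    subst hq; rfl

end Basics
section TreeLemmas
open SimpleGraph Walk
variable {α : Type*} {T : SimpleGraph α}

lemma isPath_append_support {u v w : α} {p : T.Walk u v} {q : T.Walk v w}
    (hp : p.IsPath) (hq : q.IsPath)
    (h : ∀ z, z ∈ p.support → z ∈ q.support → z = v) : (p.append q).IsPath := by
  rw [Walk.isPath_def, Walk.support_append]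
  have hqn : q.support.Nodup := hq.support_nodup
  have hqc := q.support_eq_cons
  rw [hqc, List.nodup_cons] at hqn
  refine List.Nodup.append hp.support_nodup hqn.2 ?_
  intro z hzp hzt
  have hz : z ∈ q.support := by rw [hqc]; exact List.mem_cons_of_mem _ hzt
  have : z = v := h z hzp hz
  subst this
  exact hqn.1 hzt

variable (hT : T.IsTree)
include hT

lemma tree_path_unique {u v : α} (p q : T.Walk u v) (hp : p.IsPath) (hq : q.IsPath) :
    p = q := by
  have := hT.IsAcyclic.path_unique ⟨p, hp⟩ ⟨q, hq⟩
  exact congrArg Subtype.val this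

lemma tree_isPath_length_eq_dist {u v : α} (p : T.Walk u v) (hp : p.IsPath) :
    p.length = T.dist u v := by
  obtain ⟨q, hq, hlen⟩ := hT.isConnected.exists_path_of_dist u v
  rw [tree_path_unique hT p q hp hq, hlen]

lemma tree_dist_split {u v y : α} (p : T.Walk u v) (hp : p.IsPath) (hy : y ∈ p.support) :
    T.dist u y + T.dist y v = T.dist u v := by
  classical
  have h1 := p.take_spec hy
  have ht := tree_isPath_length_eq_dist hT _ (hp.takeUntil hy)
  have hd := tree_isPath_length_eq_dist hT _ (hp.dropUntil hy)
  have hpl := tree_isPath_length_eq_dist hT p hp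
  have hl : (p.takeUntil y hy).length + (p.dropUntil y hy).length = p.length := by
    rw [← Walk.length_append, h1]
  omega

lemma tree_mem_support_of_dist_split {u v y : α} (p : T.Walk u v) (hp : p.IsPath)
    (h : T.dist u y + T.dist y v = T.dist u v) : y ∈ p.support := by
  classical
  obtain ⟨q, hq, hql⟩ := hT.isConnected.exists_path_of_dist u y
  obtain ⟨r, hr, hrl⟩ := hT.isConnected.exists_path_of_dist y v
  have hlen : (q.append r).length = T.dist u v := by rw [Walk.length_append]; omega
  have hap : (q.append r).IsPath := (q.append r).isPath_of_length_eq_dist hlen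
  rw [tree_path_unique hT p (q.append r) hp hap]
  rw [Walk.mem_support_append_iff]
  exact Or.inl q.end_mem_support

/-- The unique path between two vertices of a connected induced set stays in the set. -/
lemma tree_path_support_subset {X : Set α} (hX : (T.induce X).Connected)
    {x y : α} (hx : x ∈ X) (hy : y ∈ X) (p : T.Walk x y) (hp : p.IsPath) :
    ∀ z ∈ p.support, z ∈ X := by
  classical
  obtain ⟨w⟩ := hX ⟨x, hx⟩ ⟨y, hy⟩
  obtain ⟨p0, hsupp⟩ := walk_of_induce w
  have hsub : ∀ z ∈ p0.support, z ∈ X := by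
    intro z hz; rw [hsupp] at hz
    obtain ⟨a, _, rfl⟩ := List.mem_map.1 hz; exact a.2
  have hpb : p = p0.bypass := tree_path_unique hT p p0.bypass hp p0.bypass_isPath
  intro z hz
  exact hsub z (p0.support_bypass_subset (hpb ▸ hz))

/-- Every connected induced set has a "base": a vertex through which all
paths towards the root `r` pass. -/
lemma tree_exists_base {X : Set α} (hX : (T.induce X).Connected) (r : α) :
    ∃ b ∈ X, ∀ x ∈ X, T.dist x b + T.dist b r = T.dist x r := by
  classical
  have hne : X.Nonempty := by
    obtain ⟨⟨x, hx⟩⟩ := hX.nonempty; exact ⟨x, hx⟩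
  obtain ⟨b, hbX, hbeq⟩ := Nat.sInf_mem (hne.image (fun x => T.dist x r))
  have hbmin : ∀ x ∈ X, T.dist b r ≤ T.dist x r := by
    intro x hx
    exact le_trans (le_of_eq hbeq) (Nat.sInf_le ⟨x, hx, rfl⟩)
  have hconn := hT.isConnected
  refine ⟨b, hbX, fun x hx => ?_⟩
  obtain ⟨p, hp, hpl⟩ := hconn.exists_path_of_dist x b
  have hpX : ∀ z ∈ p.support, z ∈ X := tree_path_support_subset hT hX hx hbX p hp
  obtain ⟨q, hq, hql⟩ := hconn.exists_path_of_dist b r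
  have hP : (p.append q).IsPath := by
    refine isPath_append_support hp hq ?_
    intro z hzp hzq
    have hzX := hpX z hzp
    have hsplit := tree_dist_split hT q hq hzq
    have hle := hbmin z hzX
    have h0 : T.dist b z = 0 := by omega
    exact ((hconn.dist_eq_zero_iff).1 h0).symm
  have hmem : b ∈ (p.append q).support := by
    rw [Walk.mem_support_append_iff]; exact Or.inl p.end_mem_support
  have hsplit := tree_dist_split hT (p.append q) hP hmem
  have hlen := tree_isPath_length_eq_dist hT _ hP
  rw [Walk.length_append, hpl, hql] at hlen
  omega

/-- Helly-type step: if `t ∈ X ∩ Y`, `bX`, `bY` are bases and `bY` is no deeper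
than `bX`, then `bX ∈ Y`. -/
lemma tree_base_mem {X Y : Set α} (hX : (T.induce X).Connected) (hY : (T.induce Y).Connected)
    {r t bX bY : α} (htX : t ∈ X) (htY : t ∈ Y)
    (hbX : bX ∈ X) (hbXp : ∀ x ∈ X, T.dist x bX + T.dist bX r = T.dist x r)
    (hbY : bY ∈ Y) (hbYp : ∀ x ∈ Y, T.dist x bY + T.dist bY r = T.dist x r)
    (hd : T.dist bY r ≤ T.dist bX r) : bX ∈ Y := by
  classical
  have hconn := hT.isConnected
  obtain ⟨p, hp, hpl⟩ := hconn.exists_path_of_dist t r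
  have hmX : bX ∈ p.support :=
    tree_mem_support_of_dist_split hT p hp (hbXp t htX)
  have hmY : bY ∈ p.support :=
    tree_mem_support_of_dist_split hT p hp (hbYp t htY)
  have hsplit := p.take_spec hmY
  have hcase : bX ∈ (p.takeUntil bY hmY).support ∨ bX ∈ (p.dropUntil bY hmY).support := by
    rw [← Walk.mem_support_append_iff, hsplit]; exact hmX
  rcases hcase with hc | hc
  · exact tree_path_support_subset hT hY htY hbY _ (hp.takeUntil hmY) bX hc
  · -- bX on the path from bY to r
    have hsp := tree_dist_split hT _ (hp.dropUntil hmY) hc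
    -- dist bY bX + dist bX r = dist bY r ≤ dist bX r
    have h0 : T.dist bY bX = 0 := by omega
    have : bY = bX := (hconn.dist_eq_zero_iff).1 h0
    rwa [← this]

end TreeLemmas
section Backward
variable {V : Type*}

lemma cliqueTree_chordal [Fintype V] {G : SimpleGraph V} {T : SimpleGraph (MaxCliques G)}
    (hCT : IsCliqueTree G T) : Chordal G := by
  obtain ⟨hT, hconn⟩ := hCT
  intro n hn
  obtain ⟨m, rfl⟩ : ∃ m, n = m + 4 := ⟨n - 4, by omega⟩
  constructor
  intro emb
  set v : Fin (m + 4) → V := ⇑emb with hv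
  have hv_inj : Function.Injective v := emb.injective
  have hadj : ∀ i j : Fin (m + 4),
      G.Adj (v i) (v j) ↔ (SimpleGraph.cycleGraph (m + 4)).Adj i j := fun i j => emb.map_rel_iff
  have hval1 : ((1 : Fin (m + 4)) : ℕ) = 1 := by
    rw [Fin.val_one', Nat.mod_eq_of_lt (by omega)]
  have hval2 : ((2 : Fin (m + 4)) : ℕ) = 2 := by
    have : (2 : Fin (m + 4)) = 1 + 1 := by ext; simp [Fin.val_add]
    rw [this, Fin.val_add, hval1, Nat.mod_eq_of_lt (by omega)]
  have adj_succ : ∀ i : Fin (m + 4), (SimpleGraph.cycleGraph (m + 4)).Adj i (i + 1) := by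
    intro i
    have : (m + 4) = (m + 2) + 2 := by omega
    rw [SimpleGraph.cycleGraph_adj']
    right
    rw [add_sub_cancel_left, hval1]
  have not_adj2 : ¬ (SimpleGraph.cycleGraph (m + 4)).Adj (0 - 1 + 0) (0) → True := fun _ => trivial
  -- the cliques on the edges
  have ht : ∀ i : Fin (m + 4), ∃ Q : MaxCliques G, v i ∈ Q.1 ∧ v (i + 1) ∈ Q.1 := fun i =>
    exists_maxClique_pair ((hadj _ _).2 (adj_succ i))
  choose t ht1 ht2 using ht
  set r := t 0 with hr
  set X : Fin (m + 4) → Set (MaxCliques G) := fun i => {Q | v i ∈ Q.1} with hX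
  have hXc : ∀ i, (T.induce (X i)).Connected := fun i => hconn (v i)
  have hbase := fun i => tree_exists_base hT (hXc i) r
  choose b hb hbp using hbase
  obtain ⟨i0, -, hmax⟩ :=
    Finset.exists_max_image Finset.univ (fun i => T.dist (b i) r) ⟨0, Finset.mem_univ _⟩
  have h1 : b i0 ∈ X (i0 + 1) :=
    tree_base_mem hT (hXc i0) (hXc (i0 + 1)) (ht1 i0) (ht2 i0)
      (hb i0) (hbp i0) (hb (i0 + 1)) (hbp (i0 + 1)) (hmax _ (Finset.mem_univ _))
  have hsub : (i0 - 1) + 1 = i0 := by abel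
  have ht2' : t (i0 - 1) ∈ X i0 := by
    have := ht2 (i0 - 1); rwa [hsub] at this
  have h2 : b i0 ∈ X (i0 - 1) :=
    tree_base_mem hT (hXc i0) (hXc (i0 - 1)) ht2' (ht1 (i0 - 1))
      (hb i0) (hbp i0) (hb (i0 - 1)) (hbp (i0 - 1)) (hmax _ (Finset.mem_univ _))
  -- v (i0 - 1) and v (i0 + 1) are both in the maximal clique b i0, hence adjacent
  have hne : (i0 - 1 : Fin (m + 4)) ≠ i0 + 1 := by
    intro h
    have : (i0 + 1) - (i0 - 1) = (2 : Fin (m + 4)) := by abel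
    rw [← h, sub_self] at this
    have := congrArg Fin.val this
    rw [Fin.val_zero, hval2] at this
    omega
  have hadj' : G.Adj (v (i0 - 1)) (v (i0 + 1)) :=
    (b i0).2.adj h2 h1 (fun h => hne (hv_inj h))
  have hcyc := (hadj _ _).1 hadj'
  rw [SimpleGraph.cycleGraph_adj'] at hcyc
  have e1 : (i0 - 1) - (i0 + 1) = (0 : Fin (m+4)) - 2 := by abel
  have e2 : (i0 + 1) - (i0 - 1) = (2 : Fin (m+4)) := by abel
  rw [e1, e2] at hcyc
  have hval3 : ((3 : Fin (m + 4)) : ℕ) = 3 := by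
    have h3 : (3 : Fin (m + 4)) = 2 + 1 := by ext; simp [Fin.val_add]
    rw [h3, Fin.val_add, hval2, hval1]
    exact Nat.mod_eq_of_lt (by omega)
  rcases hcyc with h | h
  · have h02 : (0 : Fin (m + 4)) - 2 = 1 := Fin.val_injective (h.trans hval1.symm)
    have h03 : (0 : Fin (m + 4)) = 3 := by
      rw [sub_eq_iff_eq_add] at h02
      rw [h02]; ext; simp [Fin.val_add]
    have := congrArg Fin.val h03
    rw [Fin.val_zero, hval3] at this
    omega
  · rw [hval2] at h; omega

end Backward
section CycleBuild
variable {V : Type*} {G : SimpleGraph V}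

lemma chordal_induce (hG : Chordal G) (A : Set V) : Chordal (G.induce A) := by
  intro n hn
  refine ⟨fun emb => (hG n hn).false ((SimpleGraph.Embedding.induce A).comp emb)⟩

lemma cycleGraph_adj_nat {n : ℕ} (hn : 2 ≤ n) (i j : Fin n) :
    (SimpleGraph.cycleGraph n).Adj i j ↔
      (i.1 + 1 = j.1 ∨ j.1 + 1 = i.1 ∨ (i.1 = 0 ∧ j.1 = n - 1) ∨ (j.1 = 0 ∧ i.1 = n - 1)) := by
  have hi := i.2
  have hj := j.2
  have key : ∀ a b : Fin n, (a - b).1 = (n - b.1 + a.1) % n := by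
    intro a b; rw [Fin.sub_def]
  rw [SimpleGraph.cycleGraph_adj', key, key]
  have h1 : (n - j.1 + i.1) % n = if j.1 ≤ i.1 then i.1 - j.1 else n - (j.1 - i.1) := by
    split_ifs with h
    · have : n - j.1 + i.1 = (i.1 - j.1) + n := by omega
      rw [this, Nat.add_mod_right, Nat.mod_eq_of_lt (by omega)]
    · rw [Nat.mod_eq_of_lt (by omega)]; omega
  have h2 : (n - i.1 + j.1) % n = if i.1 ≤ j.1 then j.1 - i.1 else n - (i.1 - j.1) := by
    split_ifs with h
    · have : n - i.1 + j.1 = (j.1 - i.1) + n := by omega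
      rw [this, Nat.add_mod_right, Nat.mod_eq_of_lt (by omega)]
    · rw [Nat.mod_eq_of_lt (by omega)]; omega
  rw [h1, h2]
  split_ifs with ha hb hb <;> omega

lemma build_cycle_embedding {n : ℕ} (hn : 4 ≤ n) (g : ℕ → V)
    (hadj : ∀ i, i + 1 < n → G.Adj (g i) (g (i + 1)))
    (hwrap : G.Adj (g (n - 1)) (g 0))
    (hnadj : ∀ i j, j < n → i + 2 ≤ j → ¬(i = 0 ∧ j = n - 1) → ¬ G.Adj (g i) (g j))
    (hinj : ∀ i j, i < j → j < n → g i ≠ g j) :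
    Nonempty (SimpleGraph.cycleGraph n ↪g G) := by
  have hinj' : Function.Injective (fun i : Fin n => g i.1) := by
    intro i j h
    rcases lt_trichotomy i.1 j.1 with hlt | he | hgt
    · exact absurd h (hinj _ _ hlt j.2)
    · exact Fin.ext he
    · exact absurd h.symm (hinj _ _ hgt i.2)
  refine ⟨⟨⟨fun i : Fin n => g i.1, hinj'⟩, ?_⟩⟩
  intro i j
  simp only [Function.Embedding.coeFn_mk]
  rw [cycleGraph_adj_nat (by omega)]
  constructor
  · intro h
    by_contra hc
    push_neg at hc
    rcases lt_trichotomy i.1 j.1 with hlt | he | hgt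
    · exact hnadj i.1 j.1 j.2 (by omega) (by omega) h
    · exact G.loopless.irrefl _ (by rw [show g i.1 = g j.1 from congrArg g he] at h; exact h)
    · exact hnadj j.1 i.1 i.2 (by omega) (by omega) h.symm
  · intro h
    rcases h with h | h | h | h
    · have := hadj i.1 (by omega)
      rwa [h] at this
    · have := hadj j.1 (by omega)
      rw [h] at this
      exact this.symm
    · have := hwrap
      rw [← h.1, ← h.2] at this
      exact this.symm
    · have := hwrap
      rwa [← h.1, ← h.2] at this

end CycleBuild

section Geodesic
variable {V : Type*} {G : SimpleGraph V}

lemma adj_dist_le_one {u v : V} (h : G.Adj u v) : G.dist u v ≤ 1 :=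
  SimpleGraph.dist_le (SimpleGraph.Walk.cons h SimpleGraph.Walk.nil)

lemma dist_getVert_le (hc : G.Connected) {u v : V} (p : G.Walk u v) (i k : ℕ) :
    G.dist (p.getVert i) (p.getVert (i + k)) ≤ k := by
  induction k with
  | zero => simp
  | succ k ih =>
    by_cases hik : i + k < p.length
    · have hadj := p.adj_getVert_succ hik
      calc G.dist (p.getVert i) (p.getVert (i + (k + 1)))
          ≤ G.dist (p.getVert i) (p.getVert (i + k)) +
            G.dist (p.getVert (i + k)) (p.getVert (i + k + 1)) := hc.dist_triangle
        _ ≤ k + 1 := add_le_add ih (adj_dist_le_one hadj)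
    · have h1 : p.getVert (i + k) = v := p.getVert_of_length_le (by omega)
      have h2 : p.getVert (i + (k + 1)) = v := p.getVert_of_length_le (by omega)
      rw [h2]
      rw [h1] at ih
      omega

lemma dist_getVert_le' (hc : G.Connected) {u v : V} (p : G.Walk u v) {i j : ℕ} (hij : i ≤ j) :
    G.dist (p.getVert i) (p.getVert j) ≤ j - i := by
  have := dist_getVert_le hc p i (j - i)
  rwa [show i + (j - i) = j by omega] at this

/-- In a geodesic there are no chords. -/
lemma geodesic_no_chord (hc : G.Connected) {u v : V} (p : G.Walk u v)
    (hgeo : p.length = G.dist u v) {i j : ℕ} (h2 : i + 2 ≤ j) (hj : j ≤ p.length) :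
    ¬ G.Adj (p.getVert i) (p.getVert j) := by
  intro hadj
  have d1 : G.dist u (p.getVert i) ≤ i := by
    have := dist_getVert_le' hc p (Nat.zero_le i)
    rwa [p.getVert_zero] at this
  have d2 : G.dist (p.getVert j) v ≤ p.length - j := by
    have := dist_getVert_le' hc p hj
    rwa [p.getVert_length] at this
  have tri : G.dist u v ≤ G.dist u (p.getVert i) + G.dist (p.getVert i) (p.getVert j) +
      G.dist (p.getVert j) v := by
    calc G.dist u v ≤ G.dist u (p.getVert j) + G.dist (p.getVert j) v := hc.dist_triangle
      _ ≤ (G.dist u (p.getVert i) + G.dist (p.getVert i) (p.getVert j)) +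
          G.dist (p.getVert j) v := by
            exact add_le_add_left hc.dist_triangle _
  have := adj_dist_le_one hadj
  omega

/-- A geodesic visits pairwise distinct vertices. -/
lemma geodesic_getVert_injective (hc : G.Connected) {u v : V} (p : G.Walk u v)
    (hgeo : p.length = G.dist u v) {i j : ℕ} (hij : i < j) (hj : j ≤ p.length) :
    p.getVert i ≠ p.getVert j := by
  intro heq
  have d1 : G.dist u (p.getVert i) ≤ i := by
    have := dist_getVert_le' hc p (Nat.zero_le i)
    rwa [p.getVert_zero] at this
  have d2 : G.dist (p.getVert j) v ≤ p.length - j := by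
    have := dist_getVert_le' hc p hj
    rwa [p.getVert_length] at this
  have tri : G.dist u v ≤ G.dist u (p.getVert i) + G.dist (p.getVert j) v := by
    calc G.dist u v ≤ G.dist u (p.getVert i) + G.dist (p.getVert i) v := hc.dist_triangle
      _ = G.dist u (p.getVert i) + G.dist (p.getVert j) v := by rw [heq]
  omega

end Geodesic
section Separator
variable {V : Type*} {G : SimpleGraph V}

/-- The set of vertices joined to `a` by a walk avoiding `S`. -/
def SideComp (G : SimpleGraph V) (S : Set V) (a : V) : Set V :=
  {z | ∃ w : G.Walk z a, ∀ u ∈ w.support, u ∉ S}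

lemma mem_sideComp_self {S : Set V} {a : V} (ha : a ∉ S) : a ∈ SideComp G S a :=
  ⟨SimpleGraph.Walk.nil, by intro u hu; simp at hu; rwa [hu]⟩

lemma sideComp_not_mem_sep {S : Set V} {a z : V} (hz : z ∈ SideComp G S a) : z ∉ S := by
  obtain ⟨w, hw⟩ := hz
  exact hw z w.start_mem_support

lemma sideComp_extend {S : Set V} {a z z' : V} (h : G.Adj z' z) (hz : z ∈ SideComp G S a)
    (hz' : z' ∉ S) : z' ∈ SideComp G S a := by
  obtain ⟨w, hw⟩ := hz
  refine ⟨SimpleGraph.Walk.cons h w, ?_⟩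
  intro u hu
  rw [SimpleGraph.Walk.support_cons] at hu
  rcases List.mem_cons.1 hu with hu | hu
  · rwa [hu]
  · exact hw u hu

lemma walk_support_sideComp {S : Set V} {a z : V} (w : G.Walk z a)
    (hw : ∀ u ∈ w.support, u ∉ S) : ∀ u ∈ w.support, u ∈ SideComp G S a := by
  classical
  intro u hu
  exact ⟨w.dropUntil u hu, fun z hz => hw z (SimpleGraph.Walk.support_dropUntil_subset _ _ hz)⟩

lemma sideComp_not_mem_both {S : Set V} {a b z : V} (hS : Separates G S a b)
    (hza : z ∈ SideComp G S a) (hzb : z ∈ SideComp G S b) : False := by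
  obtain ⟨w1, hw1⟩ := hza
  obtain ⟨w2, hw2⟩ := hzb
  obtain ⟨x, hx, hxS⟩ := hS (w1.reverse.append w2)
  rw [SimpleGraph.Walk.mem_support_append_iff, SimpleGraph.Walk.support_reverse,
    List.mem_reverse] at hx
  rcases hx with hx | hx
  · exact hw1 x hx hxS
  · exact hw2 x hx hxS

lemma sideComp_not_adj {S : Set V} {a b x y : V} (hS : Separates G S a b)
    (hx : x ∈ SideComp G S a) (hy : y ∈ SideComp G S b) : ¬ G.Adj x y := by
  intro h
  exact sideComp_not_mem_both hS hx (sideComp_extend h hy (sideComp_not_mem_sep hx))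

lemma neighbor_in_sideComp {S : Set V} {c d x : V} (w : G.Walk c d) (hx : x ∈ w.support)
    (hc : c ∉ S) (hxS : x ∈ S) (havoid : ∀ z ∈ w.support, z ∉ S \ {x}) :
    ∃ y, G.Adj x y ∧ y ∈ SideComp G S c := by
  classical
  set p := w.takeUntil x hx with hp
  have hcount : p.support.count x = 1 := w.count_support_takeUntil_eq_one hx
  have psub : ∀ z ∈ p.support, z ∈ w.support := fun z hz =>
    SimpleGraph.Walk.support_takeUntil_subset w hx hz
  have hxc : x ≠ c := fun h => hc (h ▸ hxS)
  obtain ⟨y, hadj, q', hq⟩ := SimpleGraph.Walk.exists_eq_cons_of_ne hxc p.reverse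
  have hq'S : ∀ z ∈ q'.support, z ∉ S := by
    intro z hz
    have hzq : z ∈ p.reverse.support := by
      rw [hq, SimpleGraph.Walk.support_cons]
      exact List.mem_cons_of_mem _ hz
    rw [SimpleGraph.Walk.support_reverse, List.mem_reverse] at hzq
    have hznx : z ≠ x := by
      intro h
      subst h
      have : p.reverse.support.count z = 1 := by
        rw [SimpleGraph.Walk.support_reverse, List.count_reverse]
        exact hcount
      rw [hq, SimpleGraph.Walk.support_cons] at this
      rw [List.count_cons_self] at this
      have : q'.support.count z = 0 := by omega
      exact absurd hz (List.count_eq_zero.1 this)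
    intro hzS
    exact havoid z (psub z hzq) ⟨hzS, hznx⟩
  exact ⟨y, hadj, ⟨q', hq'S⟩⟩

end Separator
section SepClique
variable {V : Type*} {G : SimpleGraph V}

lemma induce_union_connected {S : Set V} {a x y : V} (ha : a ∉ S) (hxS : x ∈ S) (hyS : y ∈ S)
    (hnx : ∃ u, G.Adj x u ∧ u ∈ SideComp G S a) (hny : ∃ u, G.Adj y u ∧ u ∈ SideComp G S a) :
    (G.induce (SideComp G S a ∪ {x, y})).Connected := by
  set A : Set V := SideComp G S a ∪ {x, y} with hA
  have haA : a ∈ A := Or.inl (mem_sideComp_self ha)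
  have hreach : ∀ z : A, (G.induce A).Reachable z ⟨a, haA⟩ := by
    have hside : ∀ (z : V) (hz : z ∈ SideComp G S a),
        (G.induce A).Reachable ⟨z, Or.inl hz⟩ ⟨a, haA⟩ := by
      intro z hz
      obtain ⟨w, hw⟩ := hz
      have hsup := walk_support_sideComp w hw
      obtain ⟨w', -⟩ := walk_to_induce A w (fun u hu => Or.inl (hsup u hu)) (Or.inl ⟨w, hw⟩) haA
      exact ⟨w'⟩
    rintro ⟨z, hz | hz⟩
    · exact hside z hz
    · rcases hz with hz | hz
      all_goals subst hz
      · obtain ⟨u, hadj, hu⟩ := hnx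
        have h1 : (G.induce A).Adj ⟨z, Or.inr (Or.inl rfl)⟩ ⟨u, Or.inl hu⟩ := hadj
        exact h1.reachable.trans (hside u hu)
      · obtain ⟨u, hadj, hu⟩ := hny
        have h1 : (G.induce A).Adj ⟨z, Or.inr (Or.inr rfl)⟩ ⟨u, Or.inl hu⟩ := hadj
        exact h1.reachable.trans (hside u hu)
  have : Nonempty A := ⟨⟨a, haA⟩⟩
  exact ⟨fun u v => (hreach u).trans (hreach v).symm⟩

lemma separator_clique [Fintype V] (hG : Chordal G) {a b : V} {S : Set V}
    (ha : a ∉ S) (hb : b ∉ S) (hS : Separates G S a b)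
    (hmin : ∀ x ∈ S, ∃ w : G.Walk a b, ∀ z ∈ w.support, z ∉ S \ {x}) :
    G.IsClique S := by
  intro x hx y hy hxy
  by_contra hnadj
  -- neighbors of x and y on both sides
  have hnbr : ∀ z ∈ S, ∀ c ∈ ({a, b} : Set V), ∃ u, G.Adj z u ∧ u ∈ SideComp G S c := by
    intro z hz c hc
    obtain ⟨w, hw⟩ := hmin z hz
    obtain ⟨z', hz', hz'S⟩ := hS w
    have hzw : z ∈ w.support := by
      by_cases hzz : z' = z
      · rwa [← hzz]
      · exact absurd ⟨hz'S, hzz⟩ (hw z' hz')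
    rcases hc with hc | hc
    · subst hc
      exact neighbor_in_sideComp w hzw ha hz hw
    · simp only [Set.mem_singleton_iff] at hc
      subst hc
      refine neighbor_in_sideComp w.reverse ?_ hb hz ?_
      · rwa [SimpleGraph.Walk.support_reverse, List.mem_reverse]
      · intro u hu
        rw [SimpleGraph.Walk.support_reverse, List.mem_reverse] at hu
        exact hw u hu
  have hnxa := hnbr x hx a (Or.inl rfl)
  have hnya := hnbr y hy a (Or.inl rfl)
  have hnxb := hnbr x hx b (Or.inr rfl)
  have hnyb := hnbr y hy b (Or.inr rfl)
  -- the two induced connected graphs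
  set A : Set V := SideComp G S a ∪ {x, y} with hA
  set B : Set V := SideComp G S b ∪ {x, y} with hB
  have hAconn : (G.induce A).Connected := induce_union_connected ha hx hy hnxa hnya
  have hBconn : (G.induce B).Connected := induce_union_connected hb hx hy hnxb hnyb
  have hxA : x ∈ A := Or.inr (Or.inl rfl)
  have hyA : y ∈ A := Or.inr (Or.inr rfl)
  have hxB : x ∈ B := Or.inr (Or.inl rfl)
  have hyB : y ∈ B := Or.inr (Or.inr rfl)
  obtain ⟨p, hp, hplen⟩ := hAconn.exists_path_of_dist ⟨x, hxA⟩ ⟨y, hyA⟩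
  obtain ⟨q, hq, hqlen⟩ := hBconn.exists_path_of_dist ⟨x, hxB⟩ ⟨y, hyB⟩
  set np := p.length with hnp
  set nq := q.length with hnq
  -- both lengths are at least 2
  have hnp2 : 2 ≤ np := by
    rcases Nat.lt_or_ge np 2 with h | h
    · exfalso
      have h01 : p.length = 0 ∨ p.length = 1 := by omega
      rcases h01 with h0 | h0
      · exact hxy (congrArg Subtype.val (SimpleGraph.Walk.eq_of_length_eq_zero h0))
      · exact hnadj (SimpleGraph.Walk.adj_of_length_eq_one (G := G.induce A) (p := p) h0)
    · exact h
  have hnq2 : 2 ≤ nq := by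
    rcases Nat.lt_or_ge nq 2 with h | h
    · exfalso
      have h01 : q.length = 0 ∨ q.length = 1 := by omega
      rcases h01 with h0 | h0
      · exact hxy (congrArg Subtype.val (SimpleGraph.Walk.eq_of_length_eq_zero h0))
      · exact hnadj (SimpleGraph.Walk.adj_of_length_eq_one (G := G.induce B) (p := q) h0)
    · exact h
  set n := np + nq with hn
  set g : ℕ → V := fun i => if i < np then (p.getVert i).1 else (q.getVert (n - i)).1 with hg
  have hgp : ∀ i, i < np → g i = (p.getVert i).1 := fun i hi => if_pos hi
  have hgq : ∀ i, np ≤ i → g i = (q.getVert (n - i)).1 := fun i hi => if_neg (by omega)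
  have hg0 : g 0 = x := by rw [hgp 0 (by omega), p.getVert_zero]
  have hg0q : g 0 = (q.getVert 0).1 := by rw [hg0, q.getVert_zero]
  have hgnp : g np = y := by
    rw [hgq np le_rfl, show n - np = nq by omega, show nq = q.length from hnq,
      q.getVert_length]
  have hgnpp : g np = (p.getVert np).1 := by
    rw [hgnp, show np = p.length from hnp, p.getVert_length]
  -- membership of interior vertices
  have hpmem : ∀ i, 1 ≤ i → i < np → (p.getVert i).1 ∈ SideComp G S a := by
    intro i h1 h2
    rcases (p.getVert i).2 with h | h
    · exact h
    · exfalso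
      rcases h with h | h
      · have : p.getVert 0 ≠ p.getVert i :=
          geodesic_getVert_injective hAconn p hplen (by omega) (by omega)
        rw [p.getVert_zero] at this
        exact this (Subtype.ext h.symm)
      · have : p.getVert i ≠ p.getVert np :=
          geodesic_getVert_injective hAconn p hplen (by omega) (by omega)
        rw [show np = p.length from hnp, p.getVert_length] at this
        exact this (Subtype.ext h)
  have hqmem : ∀ i, 1 ≤ i → i < nq → (q.getVert i).1 ∈ SideComp G S b := by
    intro i h1 h2
    rcases (q.getVert i).2 with h | h
    · exact h
    · exfalso
      rcases h with h | h
      · have : q.getVert 0 ≠ q.getVert i :=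
          geodesic_getVert_injective hBconn q hqlen (by omega) (by omega)
        rw [q.getVert_zero] at this
        exact this (Subtype.ext h.symm)
      · have : q.getVert i ≠ q.getVert nq :=
          geodesic_getVert_injective hBconn q hqlen (by omega) (by omega)
        rw [show nq = q.length from hnq, q.getVert_length] at this
        exact this (Subtype.ext h)
  -- build the induced cycle and contradict chordality
  have hemb : Nonempty (SimpleGraph.cycleGraph n ↪g G) := by
    apply build_cycle_embedding (by omega) g
    · -- consecutive adjacency
      intro i hi
      rcases Nat.lt_or_ge (i + 1) np with h | h
      · rw [hgp i (by omega), hgp (i + 1) h]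
        exact p.adj_getVert_succ (by omega)
      · rcases Nat.eq_or_lt_of_le h with h' | h'
        · rw [hgp i (by omega), ← h', hgnpp]
          have := p.adj_getVert_succ (show i < p.length by omega)
          rwa [← h'] at this
        · have hinp : np ≤ i := by omega
          rw [hgq i hinp, hgq (i + 1) (by omega)]
          have hm : n - i = (n - (i + 1)) + 1 := by omega
          rw [hm]
          exact (q.adj_getVert_succ (by omega)).symm
    · -- wrap
      rw [hgq (n - 1) (by omega), show n - (n - 1) = 1 by omega, hg0q]
      exact (q.adj_getVert_succ (by omega)).symm
    · -- non-adjacency of non-consecutive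
      intro i j hj h2 hne hadj
      rcases Nat.lt_or_ge j np with hjp | hjp
      · rw [hgp i (by omega), hgp j hjp] at hadj
        exact geodesic_no_chord hAconn p hplen h2 (by omega) hadj
      · rcases Nat.eq_or_lt_of_le hjp with hjq | hjq
        · rw [hgp i (by omega), ← hjq, hgnpp] at hadj
          exact geodesic_no_chord hAconn p hplen (i := i) (j := np) (by omega) (by omega) hadj
        · rcases Nat.lt_or_ge i np with hip | hip
          · rcases Nat.eq_or_lt_of_le (Nat.zero_le i) with hi0 | hi0
            · -- i = 0 : chord inside q
              rw [← hi0] at hne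
              rw [← hi0, hg0q, hgq j (by omega)] at hadj
              refine geodesic_no_chord hBconn q hqlen (i := 0) (j := n - j) (by omega)
                (by omega) hadj
            · -- interior of p vs interior of q
              rw [hgp i hip, hgq j (by omega)] at hadj
              exact sideComp_not_adj hS (hpmem i (by omega) hip)
                (hqmem (n - j) (by omega) (by omega)) hadj
          · -- chord inside q
            rw [hgq i hip, hgq j (by omega)] at hadj
            refine geodesic_no_chord hBconn q hqlen (i := n - j) (j := n - i) (by omega)
              (by omega) hadj.symm
    · -- injectivity
      intro i j hij hjn heq
      rcases Nat.lt_or_ge j np with hjp | hjp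
      · rw [hgp i (by omega), hgp j hjp] at heq
        exact geodesic_getVert_injective hAconn p hplen hij (by omega) (Subtype.ext heq)
      · rcases Nat.lt_or_ge i np with hip | hip
        · rcases Nat.eq_or_lt_of_le (Nat.zero_le i) with hi0 | hi0
          · rcases Nat.eq_or_lt_of_le hjp with hjq | hjq
            · rw [← hi0, hg0, ← hjq, hgnp] at heq
              exact hxy heq
            · rw [← hi0, hg0, hgq j (by omega)] at heq
              have := hqmem (n - j) (by omega) (by omega)
              rw [← heq] at this
              exact sideComp_not_mem_sep this hx
          · rcases Nat.eq_or_lt_of_le hjp with hjq | hjq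
            · rw [hgp i hip, ← hjq, hgnp] at heq
              have := hpmem i (by omega) hip
              rw [heq] at this
              exact sideComp_not_mem_sep this hy
            · rw [hgp i hip, hgq j (by omega)] at heq
              have h1 := hpmem i (by omega) hip
              have h2 := hqmem (n - j) (by omega) (by omega)
              rw [heq] at h1
              exact sideComp_not_mem_both hS h1 h2
        · rw [hgq i hip, hgq j (by omega)] at heq
          exact geodesic_getVert_injective hBconn q hqlen
            (show n - j < n - i by omega) (by omega) (Subtype.ext heq.symm)
  obtain ⟨emb⟩ := hemb
  exact (hG n (by omega)).false emb

end SepClique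
section Dirac

lemma walk_interior_exists {V : Type*} {G : SimpleGraph V} {a b : V} (hab : a ≠ b)
    (hnadj : ¬ G.Adj a b) (w : G.Walk a b) : ∃ z ∈ w.support, z ≠ a ∧ z ≠ b := by
  cases w with
  | nil => exact absurd rfl hab
  | @cons _ c _ h p =>
    by_cases hcb : c = b
    · subst hcb; exact absurd h hnadj
    · by_cases hca : c = a
      · subst hca; exact absurd h (G.loopless.irrefl _)
      · refine ⟨c, ?_, hca, hcb⟩
        rw [SimpleGraph.Walk.support_cons]
        exact List.mem_cons_of_mem _ p.start_mem_support

lemma separates_symm {V : Type*} {G : SimpleGraph V} {S : Set V} {a b : V}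
    (h : Separates G S a b) : Separates G S b a := by
  intro p
  obtain ⟨x, hx, hxS⟩ := h p.reverse
  rw [SimpleGraph.Walk.support_reverse, List.mem_reverse] at hx
  exact ⟨x, hx, hxS⟩

lemma exists_min_separator {V : Type*} [Fintype V] (G : SimpleGraph V) {a b : V}
    (hab : a ≠ b) (hnadj : ¬ G.Adj a b) :
    ∃ S : Set V, a ∉ S ∧ b ∉ S ∧ Separates G S a b ∧
      ∀ x ∈ S, ¬ Separates G (S \ {x}) a b := by
  classical
  set F : Set (Set V) := {S | Separates G S a b ∧ a ∉ S ∧ b ∉ S} with hF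
  have hFne : F.Nonempty := by
    refine ⟨{z | z ≠ a ∧ z ≠ b}, ?_, by simp, by simp⟩
    intro p
    obtain ⟨z, hz, hza, hzb⟩ := walk_interior_exists hab hnadj p
    exact ⟨z, hz, hza, hzb⟩
  obtain ⟨S, hSF, hSmin⟩ := Set.Finite.exists_minimal (Set.toFinite F) hFne
  refine ⟨S, hSF.2.1, hSF.2.2, hSF.1, ?_⟩
  intro x hx hsep
  have hmem : (S \ {x}) ∈ F := ⟨hsep, fun h => hSF.2.1 h.1, fun h => hSF.2.2 h.1⟩
  have := hSmin hmem (Set.diff_subset)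
  exact (this hx).2 rfl

lemma dirac_aux : ∀ (k : ℕ) {W : Type u} [Fintype W], ∀ (G : SimpleGraph W),
    Fintype.card W ≤ k → Nonempty W → Chordal G →
    ((∀ p q : W, p ≠ q → G.Adj p q) ∨
      ∃ p q : W, p ≠ q ∧ ¬ G.Adj p q ∧ IsSimplicial G p ∧ IsSimplicial G q) := by
  intro k
  induction k with
  | zero =>
    intro W _ G hcard hne _
    exact absurd (Fintype.card_pos_iff.mpr hne) (by omega)
  | succ k ih =>
    intro W _ G hcard hne hch
    classical
    by_cases hcomp : ∀ p q : W, p ≠ q → G.Adj p q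
    · exact Or.inl hcomp
    push_neg at hcomp
    obtain ⟨a, b, hab, hnadj⟩ := hcomp
    obtain ⟨S, haS, hbS, hS, hmin⟩ := exists_min_separator G hab hnadj
    have hclique : G.IsClique S := by
      refine separator_clique hch haS hbS hS ?_
      intro x hx
      have h := hmin x hx
      rw [Separates] at h
      push_neg at h
      obtain ⟨w, hw⟩ := h
      exact ⟨w, hw⟩
    have key : ∀ c d : W, c ∉ S → d ∉ S → Separates G S c d →
        ∃ z, z ∈ SideComp G S c ∧ IsSimplicial G z := by
      intro c d hc hd hsep
      set A : Set W := SideComp G S c ∪ S with hA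
      have hcA : c ∈ A := Or.inl (mem_sideComp_self hc)
      have hdA : d ∉ A := by
        rintro (h | h)
        · exact sideComp_not_mem_both hsep h (mem_sideComp_self hd)
        · exact hd h
      have hcardA : Fintype.card A ≤ k := by
        have : Fintype.card A < Fintype.card W := by
          refine Fintype.card_lt_of_injective_of_notMem Subtype.val Subtype.val_injective
            (b := d) ?_
          rw [Subtype.range_coe]
          exact hdA
        omega
      have hchA : Chordal (G.induce A) := chordal_induce hch A
      have hsimp : ∃ z : A, z.1 ∉ S ∧ IsSimplicial (G.induce A) z := by
        rcases ih (G.induce A) hcardA ⟨⟨c, hcA⟩⟩ hchA with h | ⟨p, q, hpq, hnpq, hp, hq⟩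
        · refine ⟨⟨c, hcA⟩, hc, ?_⟩
          intro u hu w hw hne
          exact h u w hne
        · by_cases hpS : p.1 ∈ S
          · by_cases hqS : q.1 ∈ S
            · exfalso
              have : p.1 ≠ q.1 := fun h => hpq (Subtype.ext h)
              exact hnpq (hclique hpS hqS this)
            · exact ⟨q, hqS, hq⟩
          · exact ⟨p, hpS, hp⟩
      obtain ⟨z, hzS, hzsimp⟩ := hsimp
      have hzside : z.1 ∈ SideComp G S c := by
        rcases z.2 with h | h
        · exact h
        · exact absurd h hzS
      refine ⟨z.1, hzside, ?_⟩
      intro u hu w hw hne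
      have hmem : ∀ {t : W}, G.Adj z.1 t → t ∈ A := by
        intro t ht
        by_cases htS : t ∈ S
        · exact Or.inr htS
        · exact Or.inl (sideComp_extend ht.symm hzside htS)
      have huA : u ∈ A := hmem hu
      have hwA : w ∈ A := hmem hw
      have h1 : (⟨u, huA⟩ : A) ∈ (G.induce A).neighborSet z := by
        exact hu
      have h2 : (⟨w, hwA⟩ : A) ∈ (G.induce A).neighborSet z := by
        exact hw
      exact hzsimp h1 h2 (fun h => hne (congrArg Subtype.val h))
    obtain ⟨za, hza, hzas⟩ := key a b haS hbS hS
    obtain ⟨zb, hzb, hzbs⟩ := key b a hbS haS (separates_symm hS)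
    refine Or.inr ⟨za, zb, ?_, ?_, hzas, hzbs⟩
    · intro h
      exact sideComp_not_mem_both hS hza (h ▸ hzb)
    · exact sideComp_not_adj hS hza hzb

lemma exists_simplicial {V : Type*} [Fintype V] [Nonempty V] (G : SimpleGraph V)
    (hch : Chordal G) : ∃ v, IsSimplicial G v := by
  rcases dirac_aux (Fintype.card V) G le_rfl ‹_› hch with h | ⟨p, _, _, _, hp, _⟩
  · obtain ⟨v⟩ := ‹Nonempty V›
    exact ⟨v, fun u hu w hw hne => h u w hne⟩
  · exact ⟨p, hp⟩

end Dirac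
section Transport
variable {α β : Type*}

lemma connected_of_iso {A : SimpleGraph α} {B : SimpleGraph β} (e : A ≃g B)
    (h : A.Connected) : B.Connected :=
  h.map e.toHom e.toEquiv.surjective

lemma isTree_of_iso {A : SimpleGraph α} {B : SimpleGraph β} (e : A ≃g B) (h : B.IsTree) :
    A.IsTree := by
  constructor
  · exact h.isConnected.map e.symm.toHom e.symm.toEquiv.surjective
  · intro v c hc
    have hinj : Function.Injective e.toHom := e.toEquiv.injective
    exact h.IsAcyclic (c.map e.toHom)
      ((SimpleGraph.Walk.map_isCycle_iff_of_injective hinj).2 hc)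

lemma connected_induce_of_unique {A : SimpleGraph α} {S : Set α} {x : α} (hx : x ∈ S)
    (huniq : ∀ y ∈ S, y = x) : (A.induce S).Connected := by
  have : Nonempty S := ⟨⟨x, hx⟩⟩
  refine ⟨fun u v => ?_⟩
  have hu : u = ⟨x, hx⟩ := Subtype.ext (huniq u.1 u.2)
  have hv : v = ⟨x, hx⟩ := Subtype.ext (huniq v.1 v.2)
  rw [hu, hv]

/-- Pulling back a graph along an equivalence gives an isomorphic graph. -/
def comapIso (e : α ≃ β) (H : SimpleGraph β) : H.comap ⇑e ≃g H :=
  ⟨e, Iff.rfl⟩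

/-- Induced subgraphs correspond under `comap` of an equivalence. -/
def comapInduceIso (e : α ≃ β) (H : SimpleGraph β) (S : Set α) :
    (H.comap ⇑e).induce S ≃g H.induce (⇑e '' S) where
  toEquiv := e.image S
  map_rel_iff' := Iff.rfl

end Transport

section ExtendTree
variable {γ : Type*} {T' : SimpleGraph γ} {r : γ}

/-- Attach a new vertex `none` to the tree `T'` at the vertex `r`. -/
def extendTree (T' : SimpleGraph γ) (r : γ) : SimpleGraph (Option γ) where
  Adj x y := (∃ u v : γ, x = some u ∧ y = some v ∧ T'.Adj u v) ∨
    (x = none ∧ y = some r) ∨ (x = some r ∧ y = none)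
  symm := ⟨by
    rintro x y (⟨u, v, rfl, rfl, h⟩ | ⟨rfl, rfl⟩ | ⟨rfl, rfl⟩)
    · exact Or.inl ⟨v, u, rfl, rfl, h.symm⟩
    · exact Or.inr (Or.inr ⟨rfl, rfl⟩)
    · exact Or.inr (Or.inl ⟨rfl, rfl⟩)⟩
  loopless := ⟨by
    rintro x (⟨u, v, rfl, hv, h⟩ | ⟨rfl, h⟩ | ⟨rfl, h⟩)
    · rw [← Option.some.inj hv] at h
      exact T'.loopless.irrefl _ h
    · cases h
    · cases h⟩

@[simp] lemma extendTree_adj_some {u v : γ} :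
    (extendTree T' r).Adj (some u) (some v) ↔ T'.Adj u v := by
  constructor
  · rintro (⟨u', v', hu, hv, h⟩ | ⟨h, _⟩ | ⟨_, h⟩)
    · rwa [Option.some.inj hu, Option.some.inj hv]
    · cases h
    · cases h
  · intro h; exact Or.inl ⟨u, v, rfl, rfl, h⟩

@[simp] lemma extendTree_adj_none_left {x : Option γ} :
    (extendTree T' r).Adj none x ↔ x = some r := by
  constructor
  · rintro (⟨u', v', hu, hv, h⟩ | ⟨_, h⟩ | ⟨h, _⟩)
    · cases hu
    · exact h
    · cases h
  · rintro rfl; exact Or.inr (Or.inl ⟨rfl, rfl⟩)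

@[simp] lemma extendTree_adj_none_right {x : Option γ} :
    (extendTree T' r).Adj x none ↔ x = some r := by
  constructor
  · intro h
    exact extendTree_adj_none_left.1 h.symm
  · rintro rfl
    exact Or.inr (Or.inr ⟨rfl, rfl⟩)

/-- The embedding of `T'` into its extension. -/
def extendHom (T' : SimpleGraph γ) (r : γ) : T' →g extendTree T' r :=
  ⟨some, fun h => Or.inl ⟨_, _, rfl, rfl, h⟩⟩

lemma extendTree_connected (hT' : T'.Connected) : (extendTree T' r).Connected := by
  have : Nonempty (Option γ) := ⟨none⟩
  have hreach : ∀ x : Option γ, (extendTree T' r).Reachable x none := by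
    intro x
    cases x with
    | none => exact SimpleGraph.Reachable.refl none
    | some u =>
      have h1 : (extendTree T' r).Reachable (some u) (some r) :=
        SimpleGraph.Reachable.map (extendHom T' r) (hT'.preconnected u r)
      exact h1.trans (SimpleGraph.Adj.reachable (by simp))
  exact ⟨fun x y => (hreach x).trans (hreach y).symm⟩

/-- The non-`none` part of the extension is isomorphic to `T'`. -/
def optionNeNoneEquiv (γ : Type*) : {z : Option γ // z ≠ none} ≃ γ where
  toFun x := x.1.get (by rw [Option.isSome_iff_ne_none]; exact x.2)
  invFun u := ⟨some u, by simp⟩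
  left_inv x := by
    obtain ⟨val, h⟩ := x
    cases val with
    | none => exact absurd rfl h
    | some u => rfl
  right_inv u := rfl

def extendInduceIso (T' : SimpleGraph γ) (r : γ) :
    (extendTree T' r).induce {z : Option γ | z ≠ none} ≃g T' where
  toEquiv := optionNeNoneEquiv γ
  map_rel_iff' := by
    intro x y
    have hx : x.1 = some ((optionNeNoneEquiv γ) x) := (Option.some_get _).symm
    have hy : y.1 = some ((optionNeNoneEquiv γ) y) := (Option.some_get _).symm
    constructor
    · intro h
      show (extendTree T' r).Adj x.1 y.1
      rw [hx, hy, extendTree_adj_some]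
      exact h
    · intro h
      have h' : (extendTree T' r).Adj x.1 y.1 := h
      rw [hx, hy, extendTree_adj_some] at h'
      exact h'

lemma extendTree_acyclic (hT' : T'.IsAcyclic) : (extendTree T' r).IsAcyclic := by
  classical
  intro x c hc
  by_cases hnone : none ∈ c.support
  · have key : ∀ (c' : (extendTree T' r).Walk none none), ¬ c'.IsCycle := by
      intro c' hc'
      cases c' with
      | nil => exact absurd hc'.three_le_length (by simp)
      | @cons _ y _ h1 p =>
        have hy : y = some r := extendTree_adj_none_left.1 h1
        subst hy
        obtain ⟨z, h2, p2, hp2⟩ :=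
          SimpleGraph.Walk.exists_eq_cons_of_ne (by simp : (none : Option γ) ≠ some r) p.reverse
        have hz : z = some r := extendTree_adj_none_left.1 h2
        subst hz
        have hmem : s(none, some r) ∈ p.edges := by
          have : s(none, some r) ∈ p.reverse.edges := by
            rw [hp2, SimpleGraph.Walk.edges_cons]
            exact List.mem_cons_self
          rwa [SimpleGraph.Walk.edges_reverse, List.mem_reverse] at this
        have hnodup := hc'.isTrail.edges_nodup
        rw [SimpleGraph.Walk.edges_cons] at hnodup
        rw [List.nodup_cons] at hnodup
        exact hnodup.1 hmem
    exact key (c.rotate _ hnone) (hc.rotate hnone)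
  · have hx : x ≠ none := fun h => hnone (h ▸ c.start_mem_support)
    obtain ⟨c1, hc1⟩ := walk_to_induce {z : Option γ | z ≠ none} c
      (fun z hz h => hnone (h ▸ hz)) hx hx
    have hc1cyc : c1.IsCycle := by
      have hinj : Function.Injective
          (SimpleGraph.Embedding.induce {z : Option γ | z ≠ none}
            (G := extendTree T' r)).toHom := Subtype.val_injective
      rw [← SimpleGraph.Walk.map_isCycle_iff_of_injective hinj, hc1]
      exact hc
    have hinj2 : Function.Injective (extendInduceIso T' r).toHom :=
      (extendInduceIso T' r).toEquiv.injective
    exact hT' _ ((SimpleGraph.Walk.map_isCycle_iff_of_injective hinj2).2 hc1cyc)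

lemma extendTree_isTree (hT' : T'.IsTree) : (extendTree T' r).IsTree :=
  ⟨extendTree_connected hT'.isConnected, extendTree_acyclic hT'.IsAcyclic⟩

/-- The iso between an induced set of `some`s and the original induced set. -/
noncomputable def extendTreeInduceSomeIso (T' : SimpleGraph γ) (r : γ) (S' : Set γ) :
    T'.induce S' ≃g (extendTree T' r).induce (some '' S') where
  toEquiv := (Equiv.Set.image some S' (Option.some_injective γ))
  map_rel_iff' := by
    intro x y
    show (extendTree T' r).Adj (some x.1) (some y.1) ↔ T'.Adj x.1 y.1
    exact extendTree_adj_some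

lemma extendTree_induce_connected_some {S' : Set γ} (h : (T'.induce S').Connected) :
    ((extendTree T' r).induce (some '' S')).Connected :=
  connected_of_iso (extendTreeInduceSomeIso T' r S') h

lemma extendTree_induce_connected_insert {S' : Set γ} (h : (T'.induce S').Connected)
    (hr : r ∈ S') :
    ((extendTree T' r).induce (insert none (some '' S'))).Connected := by
  set X : Set (Option γ) := insert none (some '' S') with hX
  have hnX : (none : Option γ) ∈ X := Set.mem_insert _ _
  have hrX : (some r : Option γ) ∈ X := Set.mem_insert_of_mem _ ⟨r, hr, rfl⟩
  have : Nonempty X := ⟨⟨none, hnX⟩⟩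
  have hreach : ∀ z : X, ((extendTree T' r).induce X).Reachable z ⟨none, hnX⟩ := by
    rintro ⟨z, hz⟩
    rcases hz with hz | ⟨u, hu, rfl⟩
    · subst hz
      exact SimpleGraph.Reachable.refl _
    · let ψ : T'.induce S' →g (extendTree T' r).induce X :=
        ⟨fun w => ⟨some w.1, Set.mem_insert_of_mem _ ⟨w.1, w.2, rfl⟩⟩,
          fun hadj => extendTree_adj_some.2 hadj⟩
      have h1 : ((extendTree T' r).induce X).Reachable
          ⟨some u, Set.mem_insert_of_mem _ ⟨u, hu, rfl⟩⟩ ⟨some r, hrX⟩ :=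
        SimpleGraph.Reachable.map ψ (h.preconnected ⟨u, hu⟩ ⟨r, hr⟩)
      refine h1.trans (SimpleGraph.Adj.reachable ?_)
      show (extendTree T' r).Adj (some r) none
      simp
  exact ⟨fun u v => (hreach u).trans (hreach v).symm⟩

end ExtendTree
section CliqueBookkeeping
variable {V : Type*} {G : SimpleGraph V} {v : V}

/-- The complement of a vertex. -/
def sOf (v : V) : Set V := {u | u ≠ v}

lemma qv_clique (hsimp : IsSimplicial G v) : G.IsClique (Qv G v) := by
  intro x hx y hy hne
  rcases hx with hx | hx
  · subst hx
    rcases hy with hy | hy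
    · exact absurd hy.symm hne
    · exact hy
  · rcases hy with hy | hy
    · subst hy; exact hx.symm
    · exact hsimp hx hy hne

lemma qv_maxClique (hsimp : IsSimplicial G v) : IsMaxClique G (Qv G v) := by
  refine ⟨qv_clique hsimp, fun t ht hsub => ?_⟩
  refine subset_antisymm hsub ?_
  intro u hu
  by_cases huv : u = v
  · subst huv; exact Set.mem_insert _ _
  · have hv : v ∈ t := hsub (Set.mem_insert _ _)
    exact Set.mem_insert_of_mem _ (ht hv hu (fun h => huv h.symm))

lemma maxClique_with_v {Q : Set V} (hsimp : IsSimplicial G v) (hQ : IsMaxClique G Q)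
    (hv : v ∈ Q) : Q = Qv G v := by
  refine hQ.2 _ (qv_clique hsimp) ?_
  intro u hu
  by_cases huv : u = v
  · subst huv; exact Set.mem_insert _ _
  · exact Set.mem_insert_of_mem _ (hQ.1 hv hu (fun h => huv h.symm))

lemma lift_preim {Q : Set V} (hv : v ∉ Q) :
    Subtype.val '' ((Subtype.val : sOf v → V) ⁻¹' Q) = Q := by
  rw [Subtype.image_preimage_coe]
  refine Set.inter_eq_self_of_subset_right ?_
  intro u hu
  exact fun h => hv (h ▸ hu)

lemma clique_preim {Q : Set V} (hQ : G.IsClique Q) :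
    (G.induce (sOf v)).IsClique ((Subtype.val : sOf v → V) ⁻¹' Q) := by
  intro x hx y hy hne
  exact hQ hx hy (fun h => hne (Subtype.ext h))

lemma clique_lift {R : Set (sOf v)} (hR : (G.induce (sOf v)).IsClique R) :
    G.IsClique (Subtype.val '' R) := by
  rintro x ⟨x', hx', rfl⟩ y ⟨y', hy', rfl⟩ hne
  exact hR hx' hy' (fun h => hne (congrArg Subtype.val h))

lemma maxClique_avoid {Q : Set V} (hQ : IsMaxClique G Q) (hv : v ∉ Q) :
    IsMaxClique (G.induce (sOf v)) ((Subtype.val : sOf v → V) ⁻¹' Q) := by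
  refine ⟨clique_preim hQ.1, fun t ht hsub => ?_⟩
  have h1 : Q ⊆ Subtype.val '' t := by
    rw [← lift_preim (v := v) hv]
    exact Set.image_mono hsub
  have h2 : Q = Subtype.val '' t := hQ.2 _ (clique_lift ht) h1
  apply subset_antisymm hsub
  intro x hx
  have : x.1 ∈ Q := h2 ▸ Set.mem_image_of_mem _ hx
  exact this

lemma lift_maxClique {R : Set (sOf v)} (hR : IsMaxClique (G.induce (sOf v)) R)
    (hnb : ¬ (Subtype.val '' R ⊆ G.neighborSet v)) :
    IsMaxClique G (Subtype.val '' R) := by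
  refine ⟨clique_lift hR.1, fun t ht hsub => ?_⟩
  have hvt : v ∉ t := by
    intro hvt
    refine hnb ?_
    rintro x ⟨x', hx', rfl⟩
    exact ht hvt (hsub (Set.mem_image_of_mem _ hx')) (fun h => x'.2 h.symm)
  have hsub' : R ⊆ (Subtype.val : sOf v → V) ⁻¹' t := by
    intro x hx
    exact hsub (Set.mem_image_of_mem _ hx)
  have := hR.2 _ (clique_preim ht) hsub'
  rw [this, lift_preim hvt]

lemma lift_sub_nbhd {R : Set (sOf v)} (hsimp : IsSimplicial G v)
    (hR : IsMaxClique (G.induce (sOf v)) R)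
    (hnb : Subtype.val '' R ⊆ G.neighborSet v) :
    R = (Subtype.val : sOf v → V) ⁻¹' (G.neighborSet v) := by
  refine hR.2 _ (clique_preim hsimp) ?_
  intro x hx
  exact hnb (Set.mem_image_of_mem _ hx)

lemma lift_R0 : Subtype.val '' ((Subtype.val : sOf v → V) ⁻¹' (G.neighborSet v)) =
    G.neighborSet v :=
  lift_preim (fun h => G.loopless.irrefl v h)

end CliqueBookkeeping
section Construction

lemma build_aux : ∀ (k : ℕ) {W : Type u} [Fintype W], ∀ (G : SimpleGraph W),
    Fintype.card W ≤ k → Chordal G →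
    ∃ T : SimpleGraph (MaxCliques G), IsCliqueTree G T := by
  intro k
  induction k with
  | zero =>
    intro W _ G hcard _
    have hempty : IsEmpty W := Fintype.card_eq_zero_iff.1 (by omega)
    have hmax : IsMaxClique G (∅ : Set W) := by
      refine ⟨by intro x hx; exact absurd hx (Set.notMem_empty x), fun t _ _ => ?_⟩
      exact (Set.eq_empty_of_isEmpty t).symm
    refine ⟨⊥, ⟨?_, ?_⟩, fun w => (hempty.false w).elim⟩
    · have : Nonempty (MaxCliques G) := ⟨⟨∅, hmax⟩⟩
      refine ⟨fun Q R => ?_⟩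
      have hQR : Q = R := by
        apply Subtype.ext
        rw [Set.eq_empty_of_isEmpty Q.1, Set.eq_empty_of_isEmpty R.1]
      rw [hQR]
    · exact SimpleGraph.isAcyclic_bot
  | succ k ih =>
    intro W _ G hcard hch
    classical
    by_cases hne : Nonempty W
    case neg =>
      refine ih G ?_ hch
      have : Fintype.card W = 0 := by
        rw [Fintype.card_eq_zero_iff]; exact not_nonempty_iff.1 hne
      omega
    obtain ⟨v, hsimp⟩ := exists_simplicial G hch
    have hcard' : Fintype.card (sOf v) ≤ k := by
      have hlt : Fintype.card (sOf v) < Fintype.card W := by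
        refine Fintype.card_lt_of_injective_of_notMem Subtype.val Subtype.val_injective
          (b := v) ?_
        rw [Subtype.range_coe]
        exact fun h => h rfl
      omega
    obtain ⟨T', hT'tree, hT'conn⟩ := ih (G.induce (sOf v)) hcard' (chordal_induce hch _)
    set R₀ : Set (sOf v) := (Subtype.val : sOf v → W) ⁻¹' (G.neighborSet v) with hR₀def
    have hQvmem : v ∈ Qv G v := Set.mem_insert _ _
    have hQvmax : IsMaxClique G (Qv G v) := qv_maxClique hsimp
    have hvlift : ∀ R : Set (sOf v), v ∉ Subtype.val '' R := by
      rintro R ⟨x, _, hx⟩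
      exact x.2 hx
    have hQvuniq : ∀ Q : MaxCliques G, v ∈ Q.1 → Q = ⟨Qv G v, hQvmax⟩ :=
      fun Q hQ => Subtype.ext (maxClique_with_v hsimp Q.2 hQ)
    have hmemQv : ∀ u : W, u ≠ v → u ∈ G.neighborSet v → u ∈ Qv G v :=
      fun u _ hu => Set.mem_insert_of_mem _ hu
    have hQvnb : ∀ u : W, u ∈ Qv G v → u ≠ v → u ∈ G.neighborSet v := by
      intro u hu huv
      rcases hu with hu | hu
      · exact absurd hu huv
      · exact hu
    by_cases h0 : IsMaxClique (G.induce (sOf v)) R₀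
    · -- Case 1 : N(v) is a maximal clique of the smaller graph
      have hinv_aux : ∀ R : MaxCliques (G.induce (sOf v)), R.1 ≠ R₀ →
          IsMaxClique G (Subtype.val '' R.1) := by
        intro R hR
        exact lift_maxClique R.2 (fun hsub => hR (lift_sub_nbhd hsimp R.2 hsub))
      have hpre : ∀ Q : MaxCliques G, v ∉ Q.1 →
          (Subtype.val : sOf v → W) ⁻¹' Q.1 ≠ R₀ := by
        intro Q h hpq
        have hQN : Q.1 = G.neighborSet v := by
          rw [← lift_preim (v := v) h, hpq, hR₀def, lift_R0]
        have hQQv : Q.1 = Qv G v := by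
          refine Q.2.2 _ (qv_clique hsimp) ?_
          rw [hQN]
          exact Set.subset_insert _ _
        exact h (hQQv ▸ hQvmem)
      set f : MaxCliques G → MaxCliques (G.induce (sOf v)) := fun Q =>
        if h : v ∈ Q.1 then ⟨R₀, h0⟩ else ⟨_, maxClique_avoid Q.2 h⟩ with hf
      have hf1 : ∀ Q (h : v ∈ Q.1), f Q = ⟨R₀, h0⟩ := fun Q h => dif_pos h
      have hf2 : ∀ Q (h : v ∉ Q.1), f Q = ⟨_, maxClique_avoid Q.2 h⟩ := fun Q h => dif_neg h
      have hfbij : Function.Bijective f := by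
        constructor
        · intro Q1 Q2 heq
          by_cases h1 : v ∈ Q1.1 <;> by_cases h2 : v ∈ Q2.1
          · rw [hQvuniq Q1 h1, hQvuniq Q2 h2]
          · rw [hf1 Q1 h1, hf2 Q2 h2] at heq
            exact absurd (congrArg Subtype.val heq).symm (hpre Q2 h2)
          · rw [hf2 Q1 h1, hf1 Q2 h2] at heq
            exact absurd (congrArg Subtype.val heq) (hpre Q1 h1)
          · rw [hf2 Q1 h1, hf2 Q2 h2] at heq
            have := congrArg Subtype.val heq
            apply Subtype.ext
            rw [← lift_preim (v := v) h1, ← lift_preim (v := v) h2]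
            exact congrArg (Set.image Subtype.val) this
        · intro R
          by_cases h : R.1 = R₀
          · refine ⟨⟨Qv G v, hQvmax⟩, ?_⟩
            rw [hf1 _ hQvmem]
            exact Subtype.ext h.symm
          · refine ⟨⟨Subtype.val '' R.1, hinv_aux R h⟩, ?_⟩
            rw [hf2 _ (hvlift R.1)]
            exact Subtype.ext (Set.preimage_image_eq _ Subtype.val_injective)
      set e := Equiv.ofBijective f hfbij with he
      have he_app : ∀ Q, e Q = f Q := fun _ => rfl
      refine ⟨T'.comap ⇑e, isTree_of_iso (comapIso e T') hT'tree, ?_⟩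
      intro u
      by_cases hu : u = v
      · rw [show u = v from hu]
        exact connected_induce_of_unique (x := ⟨Qv G v, hQvmax⟩) hQvmem hQvuniq
      · have himg : ⇑e '' {Q : MaxCliques G | u ∈ Q.1} =
            {R : MaxCliques (G.induce (sOf v)) | (⟨u, hu⟩ : sOf v) ∈ R.1} := by
          ext R
          constructor
          · rintro ⟨Q, hQ, rfl⟩
            rw [Set.mem_setOf_eq] at hQ
            by_cases h : v ∈ Q.1
            · rw [he_app, hf1 Q h]
              have hQQv : Q = ⟨Qv G v, hQvmax⟩ := hQvuniq Q h
              have huQv : u ∈ Qv G v := by rw [hQQv] at hQ; exact hQ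
              exact hQvnb u huQv hu
            · rw [he_app, hf2 Q h]
              exact hQ
          · intro hR
            rw [Set.mem_setOf_eq] at hR
            by_cases h : R.1 = R₀
            · refine ⟨⟨Qv G v, hQvmax⟩, ?_, ?_⟩
              · have : (⟨u, hu⟩ : sOf v) ∈ R₀ := h ▸ hR
                exact hmemQv u hu this
              · rw [he_app, hf1 _ hQvmem]
                exact Subtype.ext h.symm
            · refine ⟨⟨Subtype.val '' R.1, hinv_aux R h⟩, Set.mem_image_of_mem _ hR, ?_⟩
              rw [he_app, hf2 _ (hvlift R.1)]
              exact Subtype.ext (Set.preimage_image_eq _ Subtype.val_injective)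
        have hconn' := hT'conn ⟨u, hu⟩
        rw [← himg] at hconn'
        exact connected_of_iso (comapInduceIso e T' {Q : MaxCliques G | u ∈ Q.1}).symm hconn'
    · -- Case 2 : N(v) is not a maximal clique of the smaller graph
      have hnotin : ∀ R : MaxCliques (G.induce (sOf v)),
          ¬ (Subtype.val '' R.1 ⊆ G.neighborSet v) := by
        intro R h
        have heq := lift_sub_nbhd hsimp R.2 h
        rw [← hR₀def] at heq
        exact h0 (heq ▸ R.2)
      have hliftmax : ∀ R : MaxCliques (G.induce (sOf v)), IsMaxClique G (Subtype.val '' R.1) :=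
        fun R => lift_maxClique R.2 (hnotin R)
      have hR₀clique : (G.induce (sOf v)).IsClique R₀ := clique_preim hsimp
      obtain ⟨R1s, hR1max, hR1sub⟩ := exists_maxClique_supset (G.induce (sOf v)) hR₀clique
      set R1 : MaxCliques (G.induce (sOf v)) := ⟨R1s, hR1max⟩ with hR1
      set f : MaxCliques G → Option (MaxCliques (G.induce (sOf v))) := fun Q =>
        if h : v ∈ Q.1 then none else some ⟨_, maxClique_avoid Q.2 h⟩ with hf
      have hf1 : ∀ Q (h : v ∈ Q.1), f Q = none := fun Q h => dif_pos h
      have hf2 : ∀ Q (h : v ∉ Q.1), f Q = some ⟨_, maxClique_avoid Q.2 h⟩ :=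
        fun Q h => dif_neg h
      have hfbij : Function.Bijective f := by
        constructor
        · intro Q1 Q2 heq
          by_cases h1 : v ∈ Q1.1 <;> by_cases h2 : v ∈ Q2.1
          · rw [hQvuniq Q1 h1, hQvuniq Q2 h2]
          · rw [hf1 Q1 h1, hf2 Q2 h2] at heq; cases heq
          · rw [hf2 Q1 h1, hf1 Q2 h2] at heq; cases heq
          · rw [hf2 Q1 h1, hf2 Q2 h2] at heq
            have := congrArg Subtype.val (Option.some.inj heq)
            apply Subtype.ext
            rw [← lift_preim (v := v) h1, ← lift_preim (v := v) h2]
            exact congrArg (Set.image Subtype.val) this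
        · intro o
          cases o with
          | none => exact ⟨⟨Qv G v, hQvmax⟩, hf1 _ hQvmem⟩
          | some R =>
            refine ⟨⟨Subtype.val '' R.1, hliftmax R⟩, ?_⟩
            rw [hf2 _ (hvlift R.1)]
            exact congrArg some (Subtype.ext (Set.preimage_image_eq _ Subtype.val_injective))
      set e := Equiv.ofBijective f hfbij with he
      have he_app : ∀ Q, e Q = f Q := fun _ => rfl
      refine ⟨(extendTree T' R1).comap ⇑e,
        isTree_of_iso (comapIso e _) (extendTree_isTree hT'tree), ?_⟩
      intro u
      by_cases hu : u = v
      · rw [show u = v from hu]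
        exact connected_induce_of_unique (x := ⟨Qv G v, hQvmax⟩) hQvmem hQvuniq
      · have hS' := hT'conn ⟨u, hu⟩
        by_cases huv : u ∈ G.neighborSet v
        · have himg : ⇑e '' {Q : MaxCliques G | u ∈ Q.1} =
              insert none (some ''
                {R : MaxCliques (G.induce (sOf v)) | (⟨u, hu⟩ : sOf v) ∈ R.1}) := by
            ext o
            constructor
            · rintro ⟨Q, hQ, rfl⟩
              rw [Set.mem_setOf_eq] at hQ
              by_cases h : v ∈ Q.1
              · rw [he_app, hf1 Q h]
                exact Set.mem_insert _ _
              · rw [he_app, hf2 Q h]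
                exact Set.mem_insert_of_mem _ ⟨_, hQ, rfl⟩
            · intro ho
              rcases ho with ho | ⟨R, hR, rfl⟩
              · subst ho
                exact ⟨⟨Qv G v, hQvmax⟩, hmemQv u hu huv, hf1 _ hQvmem⟩
              · rw [Set.mem_setOf_eq] at hR
                refine ⟨⟨Subtype.val '' R.1, hliftmax R⟩, Set.mem_image_of_mem _ hR, ?_⟩
                rw [he_app, hf2 _ (hvlift R.1)]
                exact congrArg some
                  (Subtype.ext (Set.preimage_image_eq _ Subtype.val_injective))
          have hconn' := extendTree_induce_connected_insert (r := R1) hS' (hR1sub huv)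
          rw [← himg] at hconn'
          exact connected_of_iso
            (comapInduceIso e (extendTree T' R1) {Q : MaxCliques G | u ∈ Q.1}).symm hconn'
        · have himg : ⇑e '' {Q : MaxCliques G | u ∈ Q.1} =
              some '' {R : MaxCliques (G.induce (sOf v)) | (⟨u, hu⟩ : sOf v) ∈ R.1} := by
            ext o
            constructor
            · rintro ⟨Q, hQ, rfl⟩
              rw [Set.mem_setOf_eq] at hQ
              by_cases h : v ∈ Q.1
              · exfalso
                have hQQv : Q = ⟨Qv G v, hQvmax⟩ := hQvuniq Q h
                have huQv : u ∈ Qv G v := by rw [hQQv] at hQ; exact hQ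
                exact huv (hQvnb u huQv hu)
              · rw [he_app, hf2 Q h]
                exact ⟨_, hQ, rfl⟩
            · rintro ⟨R, hR, rfl⟩
              rw [Set.mem_setOf_eq] at hR
              refine ⟨⟨Subtype.val '' R.1, hliftmax R⟩, Set.mem_image_of_mem _ hR, ?_⟩
              rw [he_app, hf2 _ (hvlift R.1)]
              exact congrArg some
                (Subtype.ext (Set.preimage_image_eq _ Subtype.val_injective))
          have hconn' := extendTree_induce_connected_some (r := R1) hS'
          rw [← himg] at hconn'
          exact connected_of_iso
            (comapInduceIso e (extendTree T' R1) {Q : MaxCliques G | u ∈ Q.1}).symm hconn'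

end Construction

theorem stmt6 [Fintype V] [Nonempty V] (G : SimpleGraph V) :
    Chordal G ↔ ∃ T : SimpleGraph (MaxCliques G), IsCliqueTree G T := by
  constructor
  · intro h
    exact build_aux (Fintype.card V) G le_rfl h
  · rintro ⟨T, hT⟩
    exact cliqueTree_chordal hT
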